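/- If Λ is a Λ-sequence and f ∈ 𝔄, then V_Λ(f, K_f) = V_Λ(f) (equality in [0,∞]); that is, the Λ-variation of f is already attained using only partition points taken from K_f, the set consisting of 0, 1 and the points of continuity of f. -/

import Mathlib

open Filter Set MeasureTheory
open scoped ENNReal Topology

/-- `l` is a Λ-sequence (indexed from 0, so `l 0` plays the role of `λ₁`):
a nondecreasing sequence of positive reals whose reciprocals have divergent sum. -/
def IsLambdaSeq (l : ℕ → ℝ) : Prop :=
  Monotone l ∧ (∀ n, 0 < l n) ∧ ¬ Summable (fun n => 1 / l n)

/-- A proper Λ-sequence: additionally `λₙ → ∞`. -/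
def IsProperLambdaSeq (l : ℕ → ℝ) : Prop :=
  IsLambdaSeq l ∧ Tendsto l atTop atTop

/-- The Λ-variation of `f` computed over partition points taken from `K`:
the supremum of `∑ⱼ |f(x_{j+1}) - f(x_j)| / λ_{β(j)}` over all `m`, all nondecreasing
tuples `x₁ ≤ … ≤ x_{m+1}` of points of `K` and all permutations `β` of the gaps. -/
noncomputable def lamVarOn (l : ℕ → ℝ) (f : ℝ → ℝ) (K : Set ℝ) : ℝ≥0∞ :=
  ⨆ (m : ℕ) (x : Fin (m + 1) → ℝ) (_ : Monotone x) (_ : ∀ j, x j ∈ K)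
    (β : Equiv.Perm (Fin m)),
    ∑ j : Fin m, ENNReal.ofReal (|f (x j.succ) - f (x j.castSucc)| / l (β j))

/-- The Λ-variation of `f : [0,1] → ℝ`. -/
noncomputable def lamVar (l : ℕ → ℝ) (f : ℝ → ℝ) : ℝ≥0∞ :=
  lamVarOn l f (Set.Icc 0 1)

/-- The norm `‖f‖_Λ = V_Λ(f) + |f 0|` (valued in `[0,∞]`). -/
noncomputable def lamNorm (l : ℕ → ℝ) (f : ℝ → ℝ) : ℝ≥0∞ :=
  lamVar l f + ENNReal.ofReal |f 0|

/-- `f` is continuous in Λ-variation: `V_{Λ_(m)}(f) → 0` as `m → ∞`. -/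
def ContInLamVar (l : ℕ → ℝ) (f : ℝ → ℝ) : Prop :=
  Tendsto (fun m => lamVar (fun n => l (n + m)) f) atTop (𝓝 0)

/-- The restricted Λ-variation `V_{Λ,δ}(f)`: the supremum of `∑ⱼ |f(bⱼ) - f(aⱼ)| / λⱼ`
over all finite sequences of nonoverlapping closed subintervals `[aⱼ, bⱼ]` of `[0,1]`
of length at most `δ`, listed in any order. -/
noncomputable def lamVarDelta (l : ℕ → ℝ) (δ : ℝ) (f : ℝ → ℝ) : ℝ≥0∞ :=
  ⨆ (k : ℕ) (a : Fin k → ℝ) (b : Fin k → ℝ)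
    (_ : ∀ j, 0 ≤ a j ∧ a j ≤ b j ∧ b j ≤ 1 ∧ b j - a j ≤ δ)
    (_ : ∀ i j, i ≠ j → b i ≤ a j ∨ b j ≤ a i),
    ∑ j : Fin k, ENNReal.ofReal (|f (b j) - f (a j)| / l j)

/-- The `n`-th Bernstein polynomial of `f : [0,1] → ℝ`. -/
noncomputable def bern (n : ℕ) (f : ℝ → ℝ) (x : ℝ) : ℝ :=
  ∑ k ∈ Finset.range (n + 1),
    f ((k : ℝ) / n) * (n.choose k : ℝ) * x ^ k * (1 - x) ^ (n - k)

/-- The `n`-th Kantorovich polynomial of `f : [0,1] → ℝ`. -/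
noncomputable def kant (n : ℕ) (f : ℝ → ℝ) (x : ℝ) : ℝ :=
  ∑ k ∈ Finset.range (n + 1),
    (n.choose k : ℝ) * x ^ k * (1 - x) ^ (n - k) *
      ((n + 1) * ∫ t in ((k : ℝ) / (n + 1))..(((k : ℝ) + 1) / (n + 1)), f t)

/-- The class `𝔄`: bounded functions on `[0,1]` with one-sided limits at every interior
point, whose value there lies between the two one-sided limits. -/
def MemA (f : ℝ → ℝ) : Prop :=
  (∃ C : ℝ, ∀ x ∈ Set.Icc (0 : ℝ) 1, |f x| ≤ C) ∧
  ∀ x ∈ Set.Ioo (0 : ℝ) 1, ∃ L R : ℝ,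
    Tendsto f (𝓝[<] x) (𝓝 L) ∧ Tendsto f (𝓝[>] x) (𝓝 R) ∧
    min L R ≤ f x ∧ f x ≤ max L R

/-- The set `K_f` consisting of `0`, `1` and the points of continuity of `f : [0,1] → ℝ`. -/
def contPts (f : ℝ → ℝ) : Set ℝ :=
  {x ∈ Set.Icc (0 : ℝ) 1 | x = 0 ∨ x = 1 ∨ ContinuousWithinAt f (Set.Icc 0 1) x}

section Aux

open Classical in
private lemma cwa_of_eq (f : ℝ → ℝ) {x L : ℝ}
    (hL : Tendsto f (𝓝[<] x) (𝓝 L)) (hR : Tendsto f (𝓝[>] x) (𝓝 L))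
    (hfx : f x = L) : ContinuousWithinAt f (Set.Icc 0 1) x := by
  have h1 : Tendsto f (𝓝[≤] x) (𝓝 (f x)) := by
    rw [← Set.Iio_union_right, nhdsWithin_union, nhdsWithin_singleton, tendsto_sup]
    exact ⟨hfx ▸ hL, tendsto_pure_nhds f x⟩
  have h2 : Tendsto f (𝓝 x) (𝓝 (f x)) := by
    rw [← nhdsLE_sup_nhdsGT x, tendsto_sup]
    exact ⟨h1, hfx ▸ hR⟩
  exact ContinuousAt.continuousWithinAt h2

private lemma discont_countable (f : ℝ → ℝ) (hf : MemA f) :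
    Set.Countable {x ∈ Set.Ioo (0:ℝ) 1 | ¬ ContinuousWithinAt f (Set.Icc 0 1) x} := by
  set T : ℕ → ℚ → ℚ → Set ℝ := fun n p q =>
    {x | (p:ℝ) < x ∧ x < (q:ℝ) ∧
      (∃ L R : ℝ, Tendsto f (𝓝[<] x) (𝓝 L) ∧ Tendsto f (𝓝[>] x) (𝓝 R) ∧
        1/((n:ℝ)+1) < |L - R|) ∧
      ∃ w₁ w₂ : ℝ, (∀ y, (p:ℝ) < y → y < x → |f y - w₁| ≤ 1/(4*((n:ℝ)+1))) ∧
        (∀ y, x < y → y < (q:ℝ) → |f y - w₂| ≤ 1/(4*((n:ℝ)+1)))} with hT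
  have hsub : ∀ n p q, Set.Subsingleton (T n p q) := by
    intro n p q
    have key : ∀ x x', x ∈ T n p q → x' ∈ T n p q → x < x' → False := by
      intro x x' hx hx' hlt
      obtain ⟨hp, hq, -, w₁, w₂, hw₁, hw₂⟩ := hx
      obtain ⟨hp', hq', ⟨L', R', hL', hR', hjump⟩, -⟩ := hx'
      have hL'b : |L' - w₂| ≤ 1/(4*((n:ℝ)+1)) := by
        have hmem : Set.Ioo x x' ∈ 𝓝[<] x' := Ioo_mem_nhdsLT_of_mem ⟨hlt, le_refl _⟩
        have hev : ∀ᶠ y in 𝓝[<] x', |f y - w₂| ≤ 1/(4*((n:ℝ)+1)) := by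
          filter_upwards [hmem] with y hy
          exact hw₂ y hy.1 (hy.2.trans hq')
        exact le_of_tendsto ((hL'.sub_const w₂).abs) hev
      have hR'b : |R' - w₂| ≤ 1/(4*((n:ℝ)+1)) := by
        have hmem : Set.Ioo x' (q:ℝ) ∈ 𝓝[>] x' := Ioo_mem_nhdsGT_of_mem ⟨le_refl _, hq'⟩
        have hev : ∀ᶠ y in 𝓝[>] x', |f y - w₂| ≤ 1/(4*((n:ℝ)+1)) := by
          filter_upwards [hmem] with y hy
          exact hw₂ y (hlt.trans hy.1) hy.2
        exact le_of_tendsto ((hR'.sub_const w₂).abs) hev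
      have htri : |L' - R'| ≤ |L' - w₂| + |w₂ - R'| := abs_sub_le _ _ _
      rw [abs_sub_comm w₂ R'] at htri
      have hpos : (0:ℝ) < 1/((n:ℝ)+1) := by positivity
      have h4 : 1/(4*((n:ℝ)+1)) = (1/((n:ℝ)+1))/4 := by
        field_simp
      linarith
    intro x hx x' hx'
    rcases lt_trichotomy x x' with h | h | h
    · exact absurd (key x x' hx hx' h) not_false
    · exact h
    · exact absurd (key x' x hx' hx h) not_false
  have hcover : {x ∈ Set.Ioo (0:ℝ) 1 | ¬ ContinuousWithinAt f (Set.Icc 0 1) x} ⊆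
      ⋃ n : ℕ, ⋃ p : ℚ, ⋃ q : ℚ, T n p q := by
    rintro x ⟨hx, hnc⟩
    obtain ⟨L, R, hL, hR, hmin, hmax⟩ := hf.2 x hx
    have hLR : L ≠ R := by
      intro h
      apply hnc
      have hfx : f x = L := le_antisymm (by simpa [← h] using hmax) (by simpa [← h] using hmin)
      exact cwa_of_eq f hL (h ▸ hR) hfx
    obtain ⟨n, hn⟩ := exists_nat_one_div_lt (abs_pos.2 (sub_ne_zero.2 hLR))
    have htolpos : (0:ℝ) < 1/(4*((n:ℝ)+1)) := by positivity
    have h1 : {y | |f y - L| ≤ 1/(4*((n:ℝ)+1))} ∈ 𝓝[<] x := by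
      have hball : Metric.closedBall L (1/(4*((n:ℝ)+1))) ∈ 𝓝 L :=
        Metric.closedBall_mem_nhds _ htolpos
      filter_upwards [hL hball] with y hy
      simpa [Real.dist_eq] using hy
    have h2 : {y | |f y - R| ≤ 1/(4*((n:ℝ)+1))} ∈ 𝓝[>] x := by
      have hball : Metric.closedBall R (1/(4*((n:ℝ)+1))) ∈ 𝓝 R :=
        Metric.closedBall_mem_nhds _ htolpos
      filter_upwards [hR hball] with y hy
      simpa [Real.dist_eq] using hy
    obtain ⟨a, ha, hasub⟩ := mem_nhdsLT_iff_exists_Ioo_subset.1 h1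
    obtain ⟨b, hb, hbsub⟩ := mem_nhdsGT_iff_exists_Ioo_subset.1 h2
    obtain ⟨p, hp1, hp2⟩ := exists_rat_btwn (show a < x from ha)
    obtain ⟨q, hq1, hq2⟩ := exists_rat_btwn (show x < b from hb)
    refine Set.mem_iUnion.2 ⟨n, Set.mem_iUnion.2 ⟨p, Set.mem_iUnion.2 ⟨q, ?_⟩⟩⟩
    refine ⟨hp2, hq1, ⟨L, R, hL, hR, by simpa using hn⟩, L, R, ?_, ?_⟩
    · intro y hy1 hy2
      exact hasub ⟨hp1.trans hy1, hy2⟩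
    · intro y hy1 hy2
      exact hbsub ⟨hy1, hy2.trans hq2⟩
  exact Set.Countable.mono hcover
    (Set.countable_iUnion fun n => Set.countable_iUnion fun p =>
      Set.countable_iUnion fun q => (hsub n p q).countable)

private lemma exists_contPt (f : ℝ → ℝ) (hf : MemA f) {a b : ℝ} (h0 : 0 ≤ a)
    (hab : a < b) (hb1 : b ≤ 1) : ∃ c, c ∈ contPts f ∧ a < c ∧ c < b := by
  by_contra h
  push_neg at h
  have hsub : Set.Ioo a b ⊆
      {x ∈ Set.Ioo (0:ℝ) 1 | ¬ ContinuousWithinAt f (Set.Icc 0 1) x} := by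
    intro c hc
    have hc01 : c ∈ Set.Ioo (0:ℝ) 1 := ⟨lt_of_le_of_lt h0 hc.1, lt_of_lt_of_le hc.2 hb1⟩
    refine ⟨hc01, fun hcw => ?_⟩
    exact absurd hc.2 (not_lt.2 (h c ⟨⟨hc01.1.le, hc01.2.le⟩, Or.inr (Or.inr hcw)⟩ hc.1))
  have hcnt : (Set.Ioo a b).Countable := (discont_countable f hf).mono hsub
  rw [← Cardinal.le_aleph0_iff_set_countable, Cardinal.mk_Ioo_real hab] at hcnt
  exact absurd hcnt (not_le.2 Cardinal.aleph0_lt_continuum)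

private lemma exists_good_left (f : ℝ → ℝ) (hf : MemA f) {v L ε a : ℝ}
    (hL : Tendsto f (𝓝[<] v) (𝓝 L)) (hε : 0 < ε)
    (hv1 : v ≤ 1) (h0 : 0 ≤ a) (hav : a < v) :
    ∃ c, c ∈ contPts f ∧ a < c ∧ c < v ∧ |f c - L| ≤ ε := by
  have h1 : {y | |f y - L| ≤ ε} ∈ 𝓝[<] v := by
    have hball : Metric.closedBall L ε ∈ 𝓝 L := Metric.closedBall_mem_nhds _ hε
    filter_upwards [hL hball] with y hy
    simpa [Real.dist_eq] using hy
  obtain ⟨w, hw, hsub⟩ := mem_nhdsLT_iff_exists_Ioo_subset.1 h1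
  obtain ⟨c, hcK, hc1, hc2⟩ := exists_contPt f hf
    (le_trans h0 (le_max_left a w)) (max_lt hav hw) hv1
  exact ⟨c, hcK, lt_of_le_of_lt (le_max_left a w) hc1, hc2,
    hsub ⟨lt_of_le_of_lt (le_max_right a w) hc1, hc2⟩⟩

private lemma exists_good_right (f : ℝ → ℝ) (hf : MemA f) {v R ε b : ℝ}
    (hR : Tendsto f (𝓝[>] v) (𝓝 R)) (hε : 0 < ε)
    (hv0 : 0 ≤ v) (hb1 : b ≤ 1) (hvb : v < b) :
    ∃ c, c ∈ contPts f ∧ v < c ∧ c < b ∧ |f c - R| ≤ ε := by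
  have h1 : {y | |f y - R| ≤ ε} ∈ 𝓝[>] v := by
    have hball : Metric.closedBall R ε ∈ 𝓝 R := Metric.closedBall_mem_nhds _ hε
    filter_upwards [hR hball] with y hy
    simpa [Real.dist_eq] using hy
  obtain ⟨w, hw, hsub⟩ := mem_nhdsGT_iff_exists_Ioo_subset.1 h1
  obtain ⟨c, hcK, hc1, hc2⟩ := exists_contPt f hf hv0 (lt_min hvb hw) ((min_le_left b w).trans hb1)
  exact ⟨c, hcK, hc1, lt_of_lt_of_le hc2 (min_le_left _ _),
    hsub ⟨hc1, lt_of_lt_of_le hc2 (min_le_right _ _)⟩⟩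

end Aux

/-- If `Λ` is a Λ-sequence and `f ∈ 𝔄`, then `V_Λ(f, K_f) = V_Λ(f)`. -/
theorem lamVarOn_contPts (l : ℕ → ℝ) (hl : IsLambdaSeq l)
    (f : ℝ → ℝ) (hf : MemA f) :
    lamVarOn l f (contPts f) = lamVar l f := by
  classical
  have hl0 : 0 < l 0 := hl.2.1 0
  have hlpos : ∀ k, 0 < l k := hl.2.1
  -- the easy direction
  have hle : lamVarOn l f (contPts f) ≤ lamVar l f := by
    simp only [lamVar, lamVarOn]
    refine iSup_le fun m => iSup_le fun x => iSup_le fun hx => iSup_le fun hK =>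
      iSup_le fun β => ?_
    exact le_iSup_of_le m (le_iSup_of_le x (le_iSup_of_le hx
      (le_iSup_of_le (fun j => (hK j).1) (le_iSup_of_le β le_rfl))))
  refine le_antisymm hle ?_
  -- base: partitions with all points in `contPts f`
  have base : ∀ (m : ℕ) (x : Fin (m+1) → ℝ), Monotone x → (∀ j, x j ∈ contPts f) →
      ∀ β : Equiv.Perm (Fin m),
      ∑ j : Fin m, ENNReal.ofReal (|f (x j.succ) - f (x j.castSucc)| / l (β j)) ≤
        lamVarOn l f (contPts f) := by
    intro m x hx hK β
    simp only [lamVarOn]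
    exact le_iSup_of_le m (le_iSup_of_le x (le_iSup_of_le hx
      (le_iSup_of_le hK (le_iSup_of_le β le_rfl))))
  -- key induction on the number of bad points
  have key : ∀ n : ℕ, ∀ m : ℕ, ∀ x : Fin (m+1) → ℝ, Monotone x →
      (∀ j, x j ∈ Set.Icc (0:ℝ) 1) → ∀ β : Equiv.Perm (Fin m),
      (Finset.univ.filter fun j => x j ∉ contPts f).card ≤ n →
      ∑ j : Fin m, ENNReal.ofReal (|f (x j.succ) - f (x j.castSucc)| / l (β j)) ≤
        lamVarOn l f (contPts f) := by
    intro n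
    induction n with
    | zero =>
      intro m x hx hK β hcard
      refine base m x hx (fun j => ?_) β
      by_contra hj
      have hmem : j ∈ Finset.univ.filter fun j => x j ∉ contPts f :=
        Finset.mem_filter.2 ⟨Finset.mem_univ _, hj⟩
      rw [Nat.le_zero, Finset.card_eq_zero] at hcard
      rw [hcard] at hmem
      exact absurd hmem (Finset.notMem_empty _)
    | succ n ih =>
      intro m x hx hK β hcard
      by_cases hc : (Finset.univ.filter fun j => x j ∉ contPts f).card ≤ n
      · exact ih m x hx hK β hc
      have hpos : 0 < (Finset.univ.filter fun j => x j ∉ contPts f).card := by omega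
      obtain ⟨j₀, hj₀mem⟩ := Finset.card_pos.1 hpos
      have hj₀ : x j₀ ∉ contPts f := (Finset.mem_filter.1 hj₀mem).2
      set v : ℝ := x j₀ with hv
      have hvIcc : v ∈ Set.Icc (0:ℝ) 1 := hK j₀
      have hv01 : v ∈ Set.Ioo (0:ℝ) 1 := by
        constructor
        · rcases eq_or_lt_of_le hvIcc.1 with h | h
          · exact absurd ⟨hvIcc, Or.inl h.symm⟩ hj₀
          · exact h
        · rcases eq_or_lt_of_le hvIcc.2 with h | h
          · exact absurd ⟨hvIcc, Or.inr (Or.inl h)⟩ hj₀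
          · exact h
      obtain ⟨L, R, hL, hR, hmin, hmax⟩ := hf.2 v hv01
      by_cases hV : lamVarOn l f (contPts f) = ⊤
      · rw [hV]; exact le_top
      refine ENNReal.le_of_forall_pos_le_add fun ε' hε' _ => ?_
      have hε'pos : (0:ℝ) < (ε' : ℝ) := hε'
      set εr : ℝ := (ε' : ℝ) * l 0 / (m+1) with hεr
      have hεrpos : 0 < εr := div_pos (mul_pos hε'pos hl0) (by positivity)
      -- modified value functions
      set fv : ℝ → Fin (m+1) → ℝ := fun t j => if x j = v then t else f (x j) with hfv
      set g : ℝ → ℝ := fun t => ∑ j : Fin m, |fv t j.succ - fv t j.castSucc| / l (β j)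
        with hg
      have hfveq : ∀ k, fv (f v) k = f (x k) := by
        intro k
        simp only [hfv]
        split_ifs with h
        · rw [h]
        · rfl
      have hSsum : ∑ j : Fin m, ENNReal.ofReal (|f (x j.succ) - f (x j.castSucc)| / l (β j))
          = ENNReal.ofReal (g (f v)) := by
        rw [hg]
        rw [ENNReal.ofReal_sum_of_nonneg
          (fun j _ => div_nonneg (abs_nonneg _) (hlpos _).le)]
        exact Finset.sum_congr rfl fun j _ => by rw [hfveq, hfveq]
      -- convexity of g
      have hconv : ∀ p q t : ℝ, p ≤ q → t ∈ Set.Icc p q → g t ≤ max (g p) (g q) := by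
        intro p q t hpq ht
        rcases eq_or_lt_of_le hpq with rfl | hlt
        · have htp : t = p := le_antisymm ht.2 ht.1
          rw [htp]
          exact le_max_left _ _
        · set θ : ℝ := (q - t)/(q - p) with hθ
          have hqp : 0 < q - p := sub_pos.2 hlt
          have hθ0 : 0 ≤ θ := div_nonneg (sub_nonneg.2 ht.2) hqp.le
          have hθ1 : θ ≤ 1 := by
            rw [hθ, div_le_one hqp]
            linarith [ht.1]
          have hte : ∀ k, fv t k = θ * fv p k + (1-θ) * fv q k := by
            intro k
            simp only [hfv]
            split_ifs with h
            · rw [hθ]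
              field_simp
              ring
            · ring
          have hterm : ∀ j : Fin m, |fv t j.succ - fv t j.castSucc| / l (β j) ≤
              θ * (|fv p j.succ - fv p j.castSucc| / l (β j)) +
              (1-θ) * (|fv q j.succ - fv q j.castSucc| / l (β j)) := by
            intro j
            have hrw : fv t j.succ - fv t j.castSucc =
                θ * (fv p j.succ - fv p j.castSucc) +
                (1-θ) * (fv q j.succ - fv q j.castSucc) := by
              rw [hte, hte]; ring
            have habs : |fv t j.succ - fv t j.castSucc| ≤
                θ * |fv p j.succ - fv p j.castSucc| +
                (1-θ) * |fv q j.succ - fv q j.castSucc| := by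
              rw [hrw]
              refine (abs_add_le _ _).trans ?_
              rw [abs_mul, abs_mul, abs_of_nonneg hθ0, abs_of_nonneg (by linarith : (0:ℝ) ≤ 1-θ)]
            calc |fv t j.succ - fv t j.castSucc| / l (β j)
                ≤ (θ * |fv p j.succ - fv p j.castSucc| +
                   (1-θ) * |fv q j.succ - fv q j.castSucc|) / l (β j) :=
                  (div_le_div_iff_of_pos_right (hlpos _)).2 habs
              _ = θ * (|fv p j.succ - fv p j.castSucc| / l (β j)) +
                  (1-θ) * (|fv q j.succ - fv q j.castSucc| / l (β j)) := by
                  rw [add_div, mul_div_assoc, mul_div_assoc]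
          have h1 : g t ≤ θ * g p + (1-θ) * g q := by
            rw [hg, Finset.mul_sum, Finset.mul_sum, ← Finset.sum_add_distrib]
            exact Finset.sum_le_sum fun j _ => hterm j
          refine h1.trans ?_
          have h2 : g p ≤ max (g p) (g q) := le_max_left _ _
          have h3 : g q ≤ max (g p) (g q) := le_max_right _ _
          nlinarith
      -- Lipschitz property of g
      have hlip : ∀ s t : ℝ, g s ≤ g t + m * (|s - t| / l 0) := by
        intro s t
        have hterm : ∀ j : Fin m, |fv s j.succ - fv s j.castSucc| / l (β j) ≤
            |fv t j.succ - fv t j.castSucc| / l (β j) + |s - t| / l 0 := by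
          intro j
          have hnum : |fv s j.succ - fv s j.castSucc| ≤
              |fv t j.succ - fv t j.castSucc| + |s - t| := by
            simp only [hfv]
            split_ifs with h1 h2 h2
            · simpa using abs_nonneg (s - t)
            · calc |s - f (x j.castSucc)| ≤ |s - t| + |t - f (x j.castSucc)| := abs_sub_le _ _ _
                _ = |t - f (x j.castSucc)| + |s - t| := add_comm _ _
            · calc |f (x j.succ) - s| = |s - f (x j.succ)| := abs_sub_comm _ _
                _ ≤ |s - t| + |t - f (x j.succ)| := abs_sub_le _ _ _
                _ = |f (x j.succ) - t| + |s - t| := by rw [abs_sub_comm t _, add_comm]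
            · simp [le_add_of_nonneg_right (abs_nonneg (s - t))]
          calc |fv s j.succ - fv s j.castSucc| / l (β j)
              ≤ (|fv t j.succ - fv t j.castSucc| + |s - t|) / l (β j) :=
                (div_le_div_iff_of_pos_right (hlpos _)).2 hnum
            _ = |fv t j.succ - fv t j.castSucc| / l (β j) + |s - t| / l (β j) := add_div _ _ _
            _ ≤ |fv t j.succ - fv t j.castSucc| / l (β j) + |s - t| / l 0 := by
                refine add_le_add (le_refl _) ?_
                exact div_le_div_of_nonneg_left (abs_nonneg _) hl0 (hl.1 (Nat.zero_le _))
        calc g s ≤ ∑ j : Fin m, (|fv t j.succ - fv t j.castSucc| / l (β j) + |s - t| / l 0) :=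
              Finset.sum_le_sum fun j _ => hterm j
          _ = g t + m * (|s - t| / l 0) := by
              rw [Finset.sum_add_distrib, Finset.sum_const, Finset.card_univ,
                Fintype.card_fin, nsmul_eq_mul]
      -- the common final step
      have main : ∀ c s : ℝ, c ∈ contPts f → |f c - s| ≤ εr →
          Monotone (fun j => if x j = v then c else x j) → g (f v) ≤ g s →
          ∑ j : Fin m, ENNReal.ofReal (|f (x j.succ) - f (x j.castSucc)| / l (β j)) ≤
            lamVarOn l f (contPts f) + ε' := by
        intro c s hcK hcs hmono hgs
        set x' : Fin (m+1) → ℝ := fun j => if x j = v then c else x j with hx'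
        have hfx' : ∀ k, f (x' k) = fv (f c) k := by
          intro k
          simp only [hx', hfv]
          split_ifs <;> rfl
        have hK' : ∀ j, x' j ∈ Set.Icc (0:ℝ) 1 := by
          intro j
          simp only [hx']
          split_ifs
          · exact hcK.1
          · exact hK j
        have hbad' : (Finset.univ.filter fun j => x' j ∉ contPts f) ⊆
            (Finset.univ.filter fun j => x j ∉ contPts f).erase j₀ := by
          intro j hj
          rw [Finset.mem_filter] at hj
          have hxj : x j ≠ v := by
            intro h
            apply hj.2
            simp only [hx', if_pos h]
            exact hcK
          refine Finset.mem_erase.2 ⟨?_, Finset.mem_filter.2 ⟨Finset.mem_univ _, ?_⟩⟩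
          · intro h
            exact hxj (by rw [h])
          · have : x' j = x j := by simp only [hx', if_neg hxj]
            rw [← this]
            exact hj.2
        have hcard' : (Finset.univ.filter fun j => x' j ∉ contPts f).card ≤ n := by
          have h1 := Finset.card_le_card hbad'
          have h2 := Finset.card_erase_of_mem hj₀mem
          omega
        have hS' := ih m x' hmono hK' β hcard'
        have hreal : g (f v) ≤ g (f c) + m * (εr / l 0) := by
          refine hgs.trans ((hlip s (f c)).trans ?_)
          have h1 : |s - f c| ≤ εr := by rw [abs_sub_comm]; exact hcs
          have h2 : |s - f c| / l 0 ≤ εr / l 0 := (div_le_div_iff_of_pos_right hl0).2 h1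
          nlinarith [Nat.cast_nonneg (α := ℝ) m]
        have hnew : ENNReal.ofReal (g (f c)) =
            ∑ j : Fin m, ENNReal.ofReal (|f (x' j.succ) - f (x' j.castSucc)| / l (β j)) := by
          rw [hg, ENNReal.ofReal_sum_of_nonneg
            (fun j _ => div_nonneg (abs_nonneg _) (hlpos _).le)]
          exact Finset.sum_congr rfl fun j _ => by rw [hfx', hfx']
        have herr : ENNReal.ofReal ((m:ℝ) * (εr / l 0)) ≤ (ε' : ℝ≥0∞) := by
          have hq : εr / l 0 = (ε':ℝ)/(m+1) := by
            rw [hεr, div_div, mul_comm ((m:ℝ)+1) (l 0), ← div_div, mul_div_assoc,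
              div_self hl0.ne', mul_one]
          have hle' : (m:ℝ) * (εr / l 0) ≤ (ε' : ℝ) := by
            rw [hq]
            rw [mul_div_assoc']
            rw [div_le_iff₀ (by positivity : (0:ℝ) < (m:ℝ)+1)]
            nlinarith [Nat.cast_nonneg (α := ℝ) m]
          calc ENNReal.ofReal ((m:ℝ) * (εr / l 0)) ≤ ENNReal.ofReal (ε':ℝ) :=
              ENNReal.ofReal_le_ofReal hle'
            _ = (ε' : ℝ≥0∞) := ENNReal.ofReal_coe_nnreal
        calc ∑ j : Fin m, ENNReal.ofReal (|f (x j.succ) - f (x j.castSucc)| / l (β j))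
            = ENNReal.ofReal (g (f v)) := hSsum
          _ ≤ ENNReal.ofReal (g (f c) + m * (εr / l 0)) := ENNReal.ofReal_le_ofReal hreal
          _ ≤ ENNReal.ofReal (g (f c)) + ENNReal.ofReal ((m:ℝ) * (εr / l 0)) :=
              ENNReal.ofReal_add_le
          _ ≤ lamVarOn l f (contPts f) + ε' := by
              refine add_le_add ?_ herr
              rw [hnew]
              exact hS'
      -- choose the side
      have hgb : g (f v) ≤ max (g L) (g R) := by
        have h1 := hconv (min L R) (max L R) (f v) min_le_max ⟨hmin, hmax⟩
        rcases le_total L R with h | h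
        · rwa [min_eq_left h, max_eq_right h] at h1
        · rw [min_eq_right h, max_eq_left h] at h1
          exact h1.trans (le_of_eq (max_comm _ _))
      rcases le_total (g L) (g R) with hLR' | hLR'
      · -- use the right-hand side, `s := R`
        set Bm : ℝ := Finset.inf' Finset.univ ⟨j₀, Finset.mem_univ _⟩
          (fun j => if v < x j then x j else 1) with hBm
        have hvB : v < Bm := by
          rw [hBm]; refine (Finset.lt_inf'_iff (H := _)).2 ?_
          intro j _
          split_ifs with h
          · exact h
          · exact hv01.2
        have hB1 : Bm ≤ 1 := by
          refine (Finset.inf'_le _ (Finset.mem_univ j₀)).trans ?_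
          rw [if_neg (lt_irrefl v)]
        obtain ⟨c, hcK, hc1, hc2, hcR⟩ := exists_good_right f hf hR hεrpos hv01.1.le hB1 hvB
        have hmono' : Monotone (fun j => if x j = v then c else x j) := by
          intro i j hij
          by_cases hi : x i = v <;> by_cases hj2 : x j = v <;>
            simp only [if_pos, if_neg, hi, hj2, if_true, if_false, le_refl]
          · have hvx : v < x j := lt_of_le_of_ne (hi ▸ hx hij) (Ne.symm hj2)
            have hBle : Bm ≤ x j := by
              refine (Finset.inf'_le _ (Finset.mem_univ j)).trans ?_
              rw [if_pos hvx]
            exact (hc2.trans_le hBle).le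
          · have hxi : x i < v := lt_of_le_of_ne (hj2 ▸ hx hij) hi
            exact (hxi.trans hc1).le
          · exact hx hij
        exact main c R hcK hcR hmono' (hgb.trans (le_of_eq (max_eq_right hLR')))
      · -- use the left-hand side, `s := L`
        set Am : ℝ := Finset.sup' Finset.univ ⟨j₀, Finset.mem_univ _⟩
          (fun j => if x j < v then x j else 0) with hAm
        have hAv : Am < v := by
          rw [hAm]; refine (Finset.sup'_lt_iff (H := _)).2 ?_
          intro j _
          split_ifs with h
          · exact h
          · exact hv01.1
        have hA0 : 0 ≤ Am := by
          refine le_trans ?_ (Finset.le_sup' _ (Finset.mem_univ j₀))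
          rw [if_neg (lt_irrefl v)]
        obtain ⟨c, hcK, hc1, hc2, hcL⟩ := exists_good_left f hf hL hεrpos hv01.2.le hA0 hAv
        have hmono' : Monotone (fun j => if x j = v then c else x j) := by
          intro i j hij
          by_cases hi : x i = v <;> by_cases hj2 : x j = v <;>
            simp only [if_pos, if_neg, hi, hj2, if_true, if_false, le_refl]
          · have hvx : v < x j := lt_of_le_of_ne (hi ▸ hx hij) (Ne.symm hj2)
            exact (hc2.trans hvx).le
          · have hxi : x i < v := lt_of_le_of_ne (hj2 ▸ hx hij) hi
            have hAle : x i ≤ Am := by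
              refine le_trans ?_ (Finset.le_sup' _ (Finset.mem_univ i))
              rw [if_pos hxi]
            exact (hAle.trans_lt hc1).le
          · exact hx hij
        exact main c L hcK hcL hmono' (hgb.trans (le_of_eq (max_eq_left hLR')))
  -- conclude
  simp only [lamVar, lamVarOn]
  refine iSup_le fun m => iSup_le fun x => iSup_le fun hx => iSup_le fun hK =>
    iSup_le fun β => ?_
  exact key _ m x hx hK β le_rfl
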